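/- Let (X_N)_{N∈ℕ} be a sequence of independent random variables, each uniformly distributed on [0,1]. Then almost surely, for all s ≥ 0, lim_{N→∞} (1/N) · #{(i,j) : 1 ≤ i ≠ j ≤ N, ‖X_i − X_j‖ ≤ s/N} = 2s; that is, the sequence almost surely has Poissonian pair correlations. -/

import Mathlib

open Filter Set Asymptotics

/-- `nid x` is the distance from `x` to the nearest integer. -/
noncomputable def nid (x : ℝ) : ℝ := |x - round x|

/-- `pairCount x s N` is the pair counting function
`R(s,N) = #{(i,j) : 1 ≤ i ≠ j ≤ N, ‖x i - x j‖ ≤ s/N}`. -/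
noncomputable def pairCount (x : ℕ → ℝ) (s : ℝ) (N : ℕ) : ℕ :=
  {p : ℕ × ℕ | 1 ≤ p.1 ∧ p.1 ≤ N ∧ 1 ≤ p.2 ∧ p.2 ≤ N ∧ p.1 ≠ p.2 ∧
      nid (x p.1 - x p.2) ≤ s / N}.ncard

/-- The sequence `x` has `f`-pair correlations:
`R(s,N)/N → f s` for every `s ≥ 0`. -/
def HasPairCorr (x : ℕ → ℝ) (f : ℝ → ℝ) : Prop :=
  ∀ s : ℝ, 0 ≤ s →
    Tendsto (fun N : ℕ => (pairCount x s N : ℝ) / N) atTop (nhds (f s))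

open MeasureTheory ProbabilityTheory

lemma nid_eq_min (x : ℝ) : nid x = min (Int.fract x) (1 - Int.fract x) :=
  abs_sub_round_eq_min x

lemma measurable_nid : Measurable nid := by
  simp only [funext nid_eq_min]
  exact (measurable_fract.min (measurable_const.sub measurable_fract))

lemma nid_neg (x : ℝ) : nid (-x) = nid x := by
  rcases eq_or_ne (Int.fract x) 0 with h | h
  · rw [nid_eq_min, nid_eq_min, Int.fract_neg_eq_zero.mpr h, h]
  · rw [nid_eq_min, nid_eq_min, Int.fract_neg h]
    have : 1 - (1 - Int.fract x) = Int.fract x := by ring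
    rw [this, min_comm]

lemma nid_le_of_int (x : ℝ) (k : ℤ) (h : |x - k| ≤ u) : nid x ≤ u :=
  (round_le x k).trans h

lemma nid_nonneg (x : ℝ) : 0 ≤ nid x := abs_nonneg _

lemma pairCount_set_finite (x : ℕ → ℝ) (s : ℝ) (N : ℕ) :
    {p : ℕ × ℕ | 1 ≤ p.1 ∧ p.1 ≤ N ∧ 1 ≤ p.2 ∧ p.2 ≤ N ∧ p.1 ≠ p.2 ∧
      nid (x p.1 - x p.2) ≤ s / N}.Finite := by
  apply Set.Finite.subset ((Set.finite_Icc 1 N).prod (Set.finite_Icc 1 N))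
  rintro ⟨i, j⟩ ⟨h1, h2, h3, h4, -, -⟩
  exact ⟨⟨h1, h2⟩, ⟨h3, h4⟩⟩

lemma pairCount_mono (x : ℕ → ℝ) {s s' : ℝ} {N M : ℕ} (hNM : N ≤ M)
    (h : s / N ≤ s' / M) : pairCount x s N ≤ pairCount x s' M := by
  apply Set.ncard_le_ncard _ (pairCount_set_finite x s' M)
  rintro ⟨i, j⟩ ⟨h1, h2, h3, h4, h5, h6⟩
  exact ⟨h1, h2.trans hNM, h3, h4.trans hNM, h5, h6.trans h⟩

lemma tendsto_sqrt_atTop : Tendsto Nat.sqrt atTop atTop := by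
  apply tendsto_atTop_atTop.2
  intro k
  exact ⟨k * k, fun N hN => Nat.le_sqrt.2 hN⟩

lemma ratio_tendsto : Tendsto (fun m : ℕ => ((m : ℝ) + 1) ^ 2 / (m : ℝ) ^ 2) atTop (nhds 1) := by
  have h : Tendsto (fun m : ℕ => (1 + 1 / (m : ℝ))) atTop (nhds 1) := by
    simpa using (tendsto_const_nhds (x := (1:ℝ))).add (tendsto_one_div_atTop_nhds_zero_nat (𝕜 := ℝ))
  have := (h.mul h)
  rw [mul_one] at this
  apply this.congr'
  filter_upwards [eventually_ge_atTop 1] with m hm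
  have hm0 : (m : ℝ) ≠ 0 := Nat.cast_ne_zero.2 (by omega)
  field_simp

lemma ratio_inv_tendsto : Tendsto (fun m : ℕ => (m : ℝ) ^ 2 / ((m : ℝ) + 1) ^ 2) atTop (nhds 1) := by
  have := ratio_tendsto.inv₀ (by norm_num)
  rw [inv_one] at this
  apply this.congr'
  filter_upwards [eventually_ge_atTop 1] with m hm
  rw [inv_div]

/-- Deterministic reduction: convergence for rationals along squares implies
convergence for all reals along the full sequence. -/
lemma det_reduction (x : ℕ → ℝ)
    (h : ∀ q : ℚ, 0 ≤ q → Tendsto (fun m : ℕ => (pairCount x q (m ^ 2) : ℝ) / (m : ℝ) ^ 2)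
      atTop (nhds (2 * q)))
    (s : ℝ) (hs : 0 ≤ s) :
    Tendsto (fun N : ℕ => (pairCount x s N : ℝ) / N) atTop (nhds (2 * s)) := by
  rw [tendsto_order]
  constructor
  · -- lower bound: ∀ b < 2s, eventually b < pc/N
    intro b hb
    rcases lt_or_ge b 0 with hb0 | hb0
    · filter_upwards [] with N
      exact hb0.trans_le (by positivity)
    · -- 0 ≤ b < 2s, so s > 0
      obtain ⟨q, hq1, hq2⟩ := exists_rat_btwn (show b / 2 < s by linarith)
      have hq0 : (0:ℝ) ≤ (q:ℝ) := le_trans (by linarith) hq1.le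
      have hbq : b < 2 * q := by linarith
      -- eventually q * (m+1)^2 ≤ s * m^2
      have hev1 : ∀ᶠ m : ℕ in atTop, (q : ℝ) * ((m : ℝ) + 1) ^ 2 ≤ s * (m : ℝ) ^ 2 := by
        have : Tendsto (fun m : ℕ => (q : ℝ) * (((m : ℝ) + 1) ^ 2 / (m : ℝ) ^ 2)) atTop
            (nhds ((q : ℝ) * 1)) := tendsto_const_nhds.mul ratio_tendsto
        rw [mul_one] at this
        filter_upwards [this.eventually_le_const hq2, eventually_ge_atTop 1] with m h1 h2
        have hm0 : (0:ℝ) < (m : ℝ) ^ 2 := by positivity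
        rw [← mul_div_assoc] at h1
        exact (div_le_iff₀ hm0).1 h1
      -- eventually pc x q (m^2) / (m+1)^2 > b
      have hT : Tendsto (fun m : ℕ => (pairCount x q (m ^ 2) : ℝ) / ((m : ℝ) + 1) ^ 2) atTop
          (nhds (2 * (q:ℝ))) := by
        have := (h q (by exact_mod_cast hq0)).mul ratio_inv_tendsto
        rw [mul_one] at this
        apply this.congr'
        filter_upwards [eventually_ge_atTop 1] with m hm
        have hm0 : (m : ℝ) ≠ 0 := Nat.cast_ne_zero.2 (by omega)
        field_simp
      have hev2 := hT.eventually_const_lt hbq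
      -- transfer to N
      have hev3 : ∀ᶠ m : ℕ in atTop, 1 ≤ m := eventually_ge_atTop 1
      have hevAll := hev1.and (hev2.and hev3)
      filter_upwards [tendsto_sqrt_atTop.eventually hevAll, eventually_ge_atTop 1]
        with N hN hN1
      obtain ⟨h1, h2, h3⟩ := hN
      set m := N.sqrt with hm
      have hm2N : m ^ 2 ≤ N := Nat.sqrt_le' N
      have hNm2 : N < (m + 1) ^ 2 := Nat.lt_succ_sqrt' N
      have hNpos : (0:ℝ) < (N:ℝ) := by exact_mod_cast hN1
      have hmpos : (0:ℝ) < (m:ℝ)^2 := by positivity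
      -- pc x q (m^2) ≤ pc x s N
      have key : pairCount x q (m ^ 2) ≤ pairCount x s N := by
        apply pairCount_mono x hm2N
        rw [div_le_div_iff₀ (by exact_mod_cast hmpos) hNpos]
        calc (q:ℝ) * N ≤ (q:ℝ) * ((m:ℝ)+1)^2 := by
              apply mul_le_mul_of_nonneg_left _ hq0
              have : (N:ℝ) < ((m:ℝ)+1)^2 := by exact_mod_cast hNm2
              exact this.le
          _ ≤ s * (m:ℝ)^2 := h1
          _ = s * ((m^2 : ℕ) : ℝ) := by push_cast; ring
      calc b < (pairCount x q (m ^ 2) : ℝ) / ((m : ℝ) + 1) ^ 2 := h2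
        _ ≤ (pairCount x s N : ℝ) / ((m : ℝ) + 1) ^ 2 := by
            apply div_le_div_of_nonneg_right _ (by positivity)
            exact_mod_cast key
        _ ≤ (pairCount x s N : ℝ) / N := by
            apply div_le_div_of_nonneg_left (by positivity) hNpos
            exact_mod_cast hNm2.le
  · -- upper bound
    intro b hb
    obtain ⟨q, hq1, hq2⟩ := exists_rat_btwn (show s < b / 2 by linarith)
    have hq0 : (0:ℝ) ≤ (q:ℝ) := hs.trans hq1.le
    have hbq : 2 * q < b := by linarith
    have hev1 : ∀ᶠ m : ℕ in atTop, s * ((m : ℝ) + 1) ^ 2 ≤ (q : ℝ) * (m : ℝ) ^ 2 := by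
      have : Tendsto (fun m : ℕ => s * (((m : ℝ) + 1) ^ 2 / (m : ℝ) ^ 2)) atTop
          (nhds (s * 1)) := tendsto_const_nhds.mul ratio_tendsto
      rw [mul_one] at this
      filter_upwards [this.eventually_le_const hq1, eventually_ge_atTop 1] with m h1 h2
      have hm0 : (0:ℝ) < (m : ℝ) ^ 2 := by positivity
      rw [← mul_div_assoc] at h1
      exact (div_le_iff₀ hm0).1 h1
    have hT : Tendsto (fun m : ℕ => (pairCount x q ((m + 1) ^ 2) : ℝ) / (m : ℝ) ^ 2) atTop
        (nhds (2 * q)) := by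
      have h2 := ((h q (by exact_mod_cast hq0)).comp (tendsto_add_atTop_nat 1)).mul ratio_tendsto
      rw [mul_one] at h2
      apply h2.congr'
      filter_upwards [eventually_ge_atTop 1] with m hm
      have hm0 : (m : ℝ) ≠ 0 := Nat.cast_ne_zero.2 (by omega)
      simp only [Function.comp]
      push_cast
      field_simp
    have hev2 := hT.eventually_lt_const hbq
    have hevAll := hev1.and (hev2.and (eventually_ge_atTop 1))
    filter_upwards [tendsto_sqrt_atTop.eventually hevAll, eventually_ge_atTop 1]
      with N hN hN1
    obtain ⟨h1, h2, h3⟩ := hN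
    set m := N.sqrt with hm
    have hm2N : m ^ 2 ≤ N := Nat.sqrt_le' N
    have hNm2 : N < (m + 1) ^ 2 := Nat.lt_succ_sqrt' N
    have hNpos : (0:ℝ) < (N:ℝ) := by exact_mod_cast hN1
    have hmpos : (0:ℝ) < (m:ℝ)^2 := by positivity
    have key : pairCount x s N ≤ pairCount x q ((m + 1) ^ 2) := by
      apply pairCount_mono x hNm2.le
      rw [div_le_div_iff₀ hNpos (by positivity : (0:ℝ) < (((m+1)^2 : ℕ):ℝ))]
      calc s * (((m+1)^2 : ℕ) : ℝ) = s * ((m:ℝ)+1)^2 := by push_cast; ring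
        _ ≤ (q:ℝ) * (m:ℝ)^2 := h1
        _ ≤ (q:ℝ) * N := by
            apply mul_le_mul_of_nonneg_left _ hq0
            exact_mod_cast hm2N
    calc (pairCount x s N : ℝ) / N ≤ (pairCount x q ((m+1)^2) : ℝ) / N := by
          apply div_le_div_of_nonneg_right _ hNpos.le
          exact_mod_cast key
      _ ≤ (pairCount x q ((m+1)^2) : ℝ) / (m:ℝ)^2 := by
          apply div_le_div_of_nonneg_left (by positivity) hmpos
          exact_mod_cast hm2N
      _ < b := h2

/-- The key geometric fact: for `x ∈ [0,1]` and `0 ≤ u ≤ 1/2`, the set of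
`y ∈ [0,1]` with `nid (x - y) ≤ u` has measure exactly `2u`. -/
lemma slice_measure {u x : ℝ} (hu0 : 0 ≤ u) (hu : u ≤ 1/2) (hx : x ∈ Icc (0:ℝ) 1) :
    (volume.restrict (Icc (0:ℝ) 1)) {y | nid (x - y) ≤ u} = ENNReal.ofReal (2*u) := by
  obtain ⟨hx0, hx1⟩ := hx
  have hSm : MeasurableSet {y : ℝ | nid (x - y) ≤ u} :=
    measurableSet_le (measurable_nid.comp (measurable_const.sub measurable_id)) measurable_const
  rw [Measure.restrict_apply hSm]
  have hset : {y : ℝ | nid (x - y) ≤ u} ∩ Icc (0:ℝ) 1 =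
      (Icc (max 0 (x-u)) (min 1 (x+u)) ∪ Icc 0 (x-1+u)) ∪ Icc (x+1-u) 1 := by
    ext y
    simp only [mem_inter_iff, mem_setOf_eq, mem_Icc, mem_union, le_max_iff, max_le_iff,
      le_min_iff, min_le_iff]
    constructor
    · rintro ⟨hnid, hy0, hy1⟩
      set k := round (x - y) with hk
      have habs : |x - y - k| ≤ u := hnid
      obtain ⟨ha1, ha2⟩ := abs_le.1 habs
      have hklt : (k:ℝ) < 2 := by linarith
      have hkgt : (-2:ℝ) < k := by linarith
      have hk2 : k < 2 := by exact_mod_cast hklt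
      have hk3 : -2 < k := by exact_mod_cast hkgt
      have hcase : k = -1 ∨ k = 0 ∨ k = 1 := by omega
      rcases hcase with h | h | h <;> rw [h] at ha1 ha2 <;> push_cast at ha1 ha2
      · exact Or.inr ⟨by linarith, hy1⟩
      · exact Or.inl (Or.inl ⟨⟨hy0, by linarith⟩, hy1, by linarith⟩)
      · exact Or.inl (Or.inr ⟨hy0, by linarith⟩)
    · rintro ((⟨⟨hy0, h1⟩, hy1, h2⟩ | ⟨hy0, h1⟩) | ⟨h1, hy1⟩)
      · refine ⟨nid_le_of_int _ 0 ?_, hy0, hy1⟩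
        push_cast
        rw [abs_le]
        constructor <;> linarith
      · refine ⟨nid_le_of_int _ 1 ?_, hy0, by linarith⟩
        push_cast
        rw [abs_le]
        constructor <;> linarith
      · refine ⟨nid_le_of_int _ (-1) ?_, by linarith, hy1⟩
        push_cast
        rw [abs_le]
        constructor <;> linarith
  rw [hset]
  have vol0 : ∀ a b : ℝ, b ≤ a → volume (Icc a b) = 0 := by
    intro a b h
    rw [Real.volume_Icc, ENNReal.ofReal_eq_zero]
    linarith
  have hmax : x - 1 + u ≤ max 0 (x - u) := by
    rcases le_or_gt u x with h | h
    · exact le_max_of_le_right (by linarith)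
    · exact le_max_of_le_left (by linarith)
  have hz1 : volume (Icc (max 0 (x-u)) (min 1 (x+u)) ∩ Icc 0 (x-1+u)) = 0 := by
    apply measure_mono_null _ (vol0 (max 0 (x-u)) (x-1+u) hmax)
    rintro y ⟨⟨hy1, -⟩, -, hy2⟩
    exact ⟨hy1, hy2⟩
  have hz2 : volume ((Icc (max 0 (x-u)) (min 1 (x+u)) ∪ Icc 0 (x-1+u)) ∩ Icc (x+1-u) 1) = 0 := by
    apply measure_mono_null _
      (vol0 (x+1-u) (max (min 1 (x+u)) (x-1+u)) ?_)
    · rintro y ⟨hy1 | hy1, hy2, -⟩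
      · exact ⟨hy2, le_max_of_le_left hy1.2⟩
      · exact ⟨hy2, le_max_of_le_right hy1.2⟩
    · exact max_le ((min_le_right 1 (x+u)).trans (by linarith)) (by linarith)
  rw [measure_union₀ measurableSet_Icc.nullMeasurableSet hz2,
    measure_union₀ measurableSet_Icc.nullMeasurableSet hz1,
    Real.volume_Icc, Real.volume_Icc, Real.volume_Icc]
  rcases le_or_gt x u with hA | hA
  · rw [max_eq_left (by linarith : x - u ≤ 0), min_eq_right (by linarith : x + u ≤ 1)]
    rw [show ENNReal.ofReal (x - 1 + u - 0) = 0 by rw [ENNReal.ofReal_eq_zero]; linarith,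
      add_zero, ← ENNReal.ofReal_add (by linarith) (by linarith)]
    congr 1; ring
  · rcases le_or_gt x (1 - u) with hB | hB
    · rw [max_eq_right (by linarith : (0:ℝ) ≤ x - u), min_eq_right (by linarith : x + u ≤ 1)]
      rw [show ENNReal.ofReal (x - 1 + u - 0) = 0 by rw [ENNReal.ofReal_eq_zero]; linarith,
        add_zero,
        show ENNReal.ofReal (1 - (x + 1 - u)) = 0 by rw [ENNReal.ofReal_eq_zero]; linarith,
        add_zero]
      congr 1; ring
    · rw [max_eq_right (by linarith : (0:ℝ) ≤ x - u), min_eq_left (by linarith : (1:ℝ) ≤ x + u)]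
      rw [show ENNReal.ofReal (1 - (x + 1 - u)) = 0 by rw [ENNReal.ofReal_eq_zero]; linarith,
        add_zero, ← ENNReal.ofReal_add (by linarith) (by linarith)]
      congr 1; ring

section Prob

variable {Ω : Type*} [MeasurableSpace Ω] {μ : Measure Ω}
  [IsProbabilityMeasure μ] {X : ℕ → Ω → ℝ}

local notation "ν" => volume.restrict (Icc (0:ℝ) 1)

instance : IsProbabilityMeasure (volume.restrict (Icc (0:ℝ) 1)) := by
  constructor
  rw [Measure.restrict_apply_univ, Real.volume_Icc]
  norm_num

lemma slice_measure' {u x : ℝ} (hu0 : 0 ≤ u) (hu : u ≤ 1/2) (hx : x ∈ Icc (0:ℝ) 1) :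
    (volume.restrict (Icc (0:ℝ) 1)) {y | nid (y - x) ≤ u} = ENNReal.ofReal (2*u) := by
  have : {y | nid (y - x) ≤ u} = {y | nid (x - y) ≤ u} := by
    ext y
    simp only [mem_setOf_eq]
    rw [← nid_neg (x - y), neg_sub]
  rw [this]
  exact slice_measure hu0 hu hx

lemma measurableSet_T (u : ℝ) : MeasurableSet {p : ℝ × ℝ | nid (p.1 - p.2) ≤ u} :=
  measurableSet_le (measurable_nid.comp (measurable_fst.sub measurable_snd)) measurable_const

lemma prodT_measure {u : ℝ} (hu0 : 0 ≤ u) (hu : u ≤ 1/2) :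
    (Measure.prod ν ν) {p : ℝ × ℝ | nid (p.1 - p.2) ≤ u} = ENNReal.ofReal (2*u) := by
  rw [Measure.prod_apply (measurableSet_T u)]
  have hae : ∀ᵐ x ∂(volume.restrict (Icc (0:ℝ) 1)),
      (ν) (Prod.mk x ⁻¹' {p : ℝ × ℝ | nid (p.1 - p.2) ≤ u}) = ENNReal.ofReal (2*u) := by
    filter_upwards [ae_restrict_mem measurableSet_Icc] with x hx
    exact slice_measure hu0 hu hx
  rw [lintegral_congr_ae hae, lintegral_const, measure_univ, mul_one]

lemma pair_prob (hmeas : ∀ i, Measurable (X i))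
    (hindep : iIndepFun X μ)
    (hunif : ∀ i, Measure.map (X i) μ = ν) {u : ℝ} (hu0 : 0 ≤ u) (hu : u ≤ 1/2)
    {i j : ℕ} (hij : i ≠ j) :
    μ {ω | nid (X i ω - X j ω) ≤ u} = ENNReal.ofReal (2*u) := by
  have hmap : Measure.map (fun ω => (X i ω, X j ω)) μ = Measure.prod ν ν := by
    rw [(indepFun_iff_map_prod_eq_prod_map_map (hmeas i).aemeasurable
      (hmeas j).aemeasurable).1 (hindep.indepFun hij), hunif i, hunif j]
  have hev : {ω | nid (X i ω - X j ω) ≤ u} =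
      (fun ω => (X i ω, X j ω)) ⁻¹' {p : ℝ × ℝ | nid (p.1 - p.2) ≤ u} := rfl
  rw [hev, ← Measure.map_apply ((hmeas i).prodMk (hmeas j)) (measurableSet_T u), hmap]
  exact prodT_measure hu0 hu

lemma triple_prob (hmeas : ∀ i, Measurable (X i))
    (hindep : iIndepFun X μ)
    (hunif : ∀ i, Measure.map (X i) μ = ν) {u : ℝ} (hu0 : 0 ≤ u) (hu : u ≤ 1/2)
    {a b c : ℕ} (hab : a ≠ b) (hcb : c ≠ b) (hac : a ≠ c) :
    μ ({ω | nid (X a ω - X b ω) ≤ u} ∩ {ω | nid (X c ω - X b ω) ≤ u})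
      = ENNReal.ofReal (2*u) * ENNReal.ofReal (2*u) := by
  have hpair : Measurable (fun ω => (X a ω, X c ω)) := (hmeas a).prodMk (hmeas c)
  have h1 : IndepFun (X b) (fun ω => (X a ω, X c ω)) μ :=
    (hindep.indepFun_prodMk hmeas a c b hab hcb).symm
  have hmap : Measure.map (fun ω => (X b ω, (X a ω, X c ω))) μ
      = Measure.prod ν (Measure.prod ν ν) := by
    rw [(indepFun_iff_map_prod_eq_prod_map_map (hmeas b).aemeasurable
      hpair.aemeasurable).1 h1, hunif b,
      (indepFun_iff_map_prod_eq_prod_map_map (hmeas a).aemeasurable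
      (hmeas c).aemeasurable).1 (hindep.indepFun hac), hunif a, hunif c]
  have hT2 : MeasurableSet {q : ℝ × (ℝ × ℝ) | nid (q.2.1 - q.1) ≤ u ∧ nid (q.2.2 - q.1) ≤ u} := by
    apply MeasurableSet.inter
    · exact measurableSet_le (measurable_nid.comp ((measurable_fst.comp measurable_snd).sub
        measurable_fst)) measurable_const
    · exact measurableSet_le (measurable_nid.comp ((measurable_snd.comp measurable_snd).sub
        measurable_fst)) measurable_const
  have hev : {ω | nid (X a ω - X b ω) ≤ u} ∩ {ω | nid (X c ω - X b ω) ≤ u} =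
      (fun ω => (X b ω, (X a ω, X c ω))) ⁻¹'
        {q : ℝ × (ℝ × ℝ) | nid (q.2.1 - q.1) ≤ u ∧ nid (q.2.2 - q.1) ≤ u} := rfl
  rw [hev, ← Measure.map_apply ((hmeas b).prodMk hpair) hT2, hmap,
    Measure.prod_apply hT2]
  have hae : ∀ᵐ y ∂(volume.restrict (Icc (0:ℝ) 1)),
      (Measure.prod ν ν) (Prod.mk y ⁻¹'
        {q : ℝ × (ℝ × ℝ) | nid (q.2.1 - q.1) ≤ u ∧ nid (q.2.2 - q.1) ≤ u})
      = ENNReal.ofReal (2*u) * ENNReal.ofReal (2*u) := by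
    filter_upwards [ae_restrict_mem measurableSet_Icc] with y hy
    have hset : Prod.mk y ⁻¹' {q : ℝ × (ℝ × ℝ) | nid (q.2.1 - q.1) ≤ u ∧ nid (q.2.2 - q.1) ≤ u}
        = {w : ℝ | nid (w - y) ≤ u} ×ˢ {w : ℝ | nid (w - y) ≤ u} := by
      ext z
      simp [Set.mem_prod]
    rw [hset, Measure.prod_prod, slice_measure' hu0 hu hy]
  rw [lintegral_congr_ae hae, lintegral_const, measure_univ, mul_one]

lemma quad_prob (hmeas : ∀ i, Measurable (X i))
    (hindep : iIndepFun X μ)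
    (hunif : ∀ i, Measure.map (X i) μ = ν) {u : ℝ} (hu0 : 0 ≤ u) (hu : u ≤ 1/2)
    {i j k l : ℕ} (hij : i ≠ j) (hkl : k ≠ l) (hik : i ≠ k) (hil : i ≠ l)
    (hjk : j ≠ k) (hjl : j ≠ l) :
    μ ({ω | nid (X i ω - X j ω) ≤ u} ∩ {ω | nid (X k ω - X l ω) ≤ u})
      = ENNReal.ofReal (2*u) * ENNReal.ofReal (2*u) := by
  have h1 : IndepFun (fun ω => (X i ω, X j ω)) (fun ω => (X k ω, X l ω)) μ :=
    hindep.indepFun_prodMk_prodMk hmeas i j k l hik hil hjk hjl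
  have := h1.measure_inter_preimage_eq_mul {p : ℝ × ℝ | nid (p.1 - p.2) ≤ u}
    {p : ℝ × ℝ | nid (p.1 - p.2) ≤ u} (measurableSet_T u) (measurableSet_T u)
  have hev1 : {ω | nid (X i ω - X j ω) ≤ u} =
      (fun ω => (X i ω, X j ω)) ⁻¹' {p : ℝ × ℝ | nid (p.1 - p.2) ≤ u} := rfl
  have hev2 : {ω | nid (X k ω - X l ω) ≤ u} =
      (fun ω => (X k ω, X l ω)) ⁻¹' {p : ℝ × ℝ | nid (p.1 - p.2) ≤ u} := rfl
  rw [hev1, hev2, this, ← hev1, ← hev2,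
    pair_prob hmeas hindep hunif hu0 hu hij, pair_prob hmeas hindep hunif hu0 hu hkl]


lemma cross_prob (hmeas : ∀ i, Measurable (X i))
    (hindep : iIndepFun X μ)
    (hunif : ∀ i, Measure.map (X i) μ = ν) {u : ℝ} (hu0 : 0 ≤ u) (hu : u ≤ 1/2)
    {i j k l : ℕ} (hij : i ≠ j) (hkl : k ≠ l) (h1 : ¬(k = i ∧ l = j))
    (h2 : ¬(k = j ∧ l = i)) :
    μ ({ω | nid (X i ω - X j ω) ≤ u} ∩ {ω | nid (X k ω - X l ω) ≤ u})
      = ENNReal.ofReal (2*u) * ENNReal.ofReal (2*u) := by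
  have hsym : ∀ a b : ℕ, {ω | nid (X a ω - X b ω) ≤ u} = {ω | nid (X b ω - X a ω) ≤ u} := by
    intro a b
    ext ω
    simp only [mem_setOf_eq]
    rw [← nid_neg (X a ω - X b ω), neg_sub]
  by_cases hki : k = i
  · subst hki
    have hlj : l ≠ j := fun h => h1 ⟨rfl, h⟩
    rw [hsym k j, hsym k l]
    exact triple_prob hmeas hindep hunif hu0 hu hij.symm hkl.symm hlj.symm
  · by_cases hkj : k = j
    · subst hkj
      have hli : l ≠ i := fun h => h2 ⟨rfl, h⟩
      rw [hsym k l]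
      exact triple_prob hmeas hindep hunif hu0 hu hij hkl.symm hli.symm
    · by_cases hli : l = i
      · subst hli
        rw [hsym l j]
        exact triple_prob hmeas hindep hunif hu0 hu hij.symm hkl (Ne.symm hkj)
      · by_cases hlj : l = j
        · subst hlj
          exact triple_prob hmeas hindep hunif hu0 hu hij hkl (Ne.symm hki)
        · exact quad_prob hmeas hindep hunif hu0 hu hij hkl (Ne.symm hki) (Ne.symm hli)
            (Ne.symm hkj) (Ne.symm hlj)

/-- Moments of the pair counting function: mean and variance bound. -/
lemma moments (hmeas : ∀ i, Measurable (X i))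
    (hindep : iIndepFun X μ)
    (hunif : ∀ i, Measure.map (X i) μ = ν) {t : ℝ} (ht : 0 ≤ t)
    {N : ℕ} (hN1 : 1 ≤ N) (hN2 : 2*t ≤ N) :
    MemLp (fun ω => (pairCount (fun n => X n ω) t N : ℝ)) 2 μ ∧
    μ[fun ω => (pairCount (fun n => X n ω) t N : ℝ)] = ((N:ℝ)^2 - N) * (2*(t/N)) ∧
    variance (fun ω => (pairCount (fun n => X n ω) t N : ℝ)) μ ≤ 4*t*N := by
  classical
  have hNpos : (0:ℝ) < N := by exact_mod_cast hN1
  set u : ℝ := t / N with hu_def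
  have hu0 : 0 ≤ u := div_nonneg ht hNpos.le
  have hu : u ≤ 1/2 := by rw [hu_def, div_le_iff₀ hNpos]; linarith
  set A : ℕ → ℕ → Set Ω := fun i j => {ω | nid (X i ω - X j ω) ≤ u} with hA_def
  have hA : ∀ i j, MeasurableSet (A i j) := fun i j =>
    measurableSet_le (measurable_nid.comp ((hmeas i).sub (hmeas j))) measurable_const
  have hAμ : ∀ i j, i ≠ j → μ (A i j) = ENNReal.ofReal (2*u) := fun i j hij =>
    pair_prob hmeas hindep hunif hu0 hu hij
  have hAsymm : ∀ i j, A i j = A j i := by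
    intro i j
    ext ω
    simp only [hA_def, mem_setOf_eq]
    rw [← nid_neg (X i ω - X j ω), neg_sub]
  set P : Finset (ℕ × ℕ) := (Finset.Icc 1 N).offDiag with hP_def
  set f : ℕ × ℕ → Ω → ℝ := fun p => (A p.1 p.2).indicator (fun _ => (1:ℝ)) with hf_def
  -- representation
  have hrep : (fun ω => (pairCount (fun n => X n ω) t N : ℝ)) = fun ω => ∑ p ∈ P, f p ω := by
    funext ω
    have hseteq : {p : ℕ × ℕ | 1 ≤ p.1 ∧ p.1 ≤ N ∧ 1 ≤ p.2 ∧ p.2 ≤ N ∧ p.1 ≠ p.2 ∧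
        nid (X p.1 ω - X p.2 ω) ≤ t / N} =
        ↑(P.filter (fun p => nid (X p.1 ω - X p.2 ω) ≤ t / N)) := by
      ext p
      simp only [mem_setOf_eq, Finset.coe_filter, Finset.mem_offDiag, Finset.mem_Icc, hP_def]
      tauto
    rw [pairCount, hseteq, Set.ncard_coe_finset]
    rw [Finset.card_filter]
    push_cast
    apply Finset.sum_congr rfl
    intro p _
    simp only [hf_def, Set.indicator_apply, hA_def, mem_setOf_eq, hu_def]
  have hint : ∀ p : ℕ × ℕ, Integrable (f p) μ := fun p =>
    (integrable_const (1:ℝ)).indicator (hA _ _)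
  have hmem1 : ∀ p : ℕ × ℕ, MemLp (f p) 2 μ := fun p =>
    memLp_indicator_const 2 (hA _ _) 1 (Or.inr (measure_ne_top μ _))
  have hMem : MemLp (fun ω => ∑ p ∈ P, f p ω) 2 μ := by
    have h1 := memLp_finset_sum' P (fun p (_ : p ∈ P) => hmem1 p)
    have h2 : (fun ω => ∑ p ∈ P, f p ω) = ∑ p ∈ P, f p := by
      funext ω
      simp [Finset.sum_apply]
    rw [h2]
    exact h1
  rw [hrep]
  have hcard : ((P.card : ℝ)) = (N:ℝ)^2 - N := by
    have h1 : P.card = N*N - N := by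
      rw [hP_def, Finset.offDiag_card, Nat.card_Icc]
      simp
    rw [h1, Nat.cast_sub (Nat.le_mul_of_pos_left N (by omega))]
    push_cast
    ring
  have hEf : ∀ p ∈ P, ∫ ω, f p ω ∂μ = 2*u := by
    intro p hp
    obtain ⟨hp1, hp2, hpne⟩ := Finset.mem_offDiag.1 hp
    rw [hf_def]
    simp only
    rw [integral_indicator_const (1:ℝ) (hA _ _), measureReal_def, hAμ _ _ hpne, smul_eq_mul, mul_one,
      ENNReal.toReal_ofReal (by linarith)]
  have hEY : μ[fun ω => ∑ p ∈ P, f p ω] = ((N:ℝ)^2 - N) * (2*u) := by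
    rw [integral_finset_sum P (fun p _ => hint p), Finset.sum_congr rfl hEf,
      Finset.sum_const, nsmul_eq_mul, hcard]
  refine ⟨hMem, hEY, ?_⟩
  -- cross probabilities
  have hcross : ∀ p ∈ P, ∀ q ∈ P, q ≠ p → q ≠ p.swap →
      μ (A p.1 p.2 ∩ A q.1 q.2) = ENNReal.ofReal (2*u) * ENNReal.ofReal (2*u) := by
    rintro ⟨i, j⟩ hp ⟨k, l⟩ hq hq1 hq2
    obtain ⟨-, -, hij⟩ := Finset.mem_offDiag.1 hp
    obtain ⟨-, -, hkl⟩ := Finset.mem_offDiag.1 hq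
    simp only
    apply cross_prob hmeas hindep hunif hu0 hu hij hkl
    · rintro ⟨ha, hb⟩
      subst ha; subst hb
      exact hq1 rfl
    · rintro ⟨ha, hb⟩
      subst ha; subst hb
      exact hq2 rfl
  -- pointwise product of indicators
  have hmul : ∀ (p q : ℕ × ℕ) (ω : Ω), f p ω * f q ω
      = ((A p.1 p.2 ∩ A q.1 q.2).indicator (fun _ => (1:ℝ))) ω := by
    intro p q ω
    simp only [hf_def, Set.indicator_apply, mem_inter_iff]
    by_cases h1 : ω ∈ A p.1 p.2 <;> by_cases h2 : ω ∈ A q.1 q.2 <;> simp [h1, h2]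
  -- second moment
  have hS2 : μ[(fun ω => ∑ p ∈ P, f p ω)^2]
      ≤ ((P.card : ℝ)*(2*u))^2 + 2*((P.card : ℝ)*(2*u)) := by
    have hps : (fun ω => ∑ p ∈ P, f p ω)^2 = fun ω =>
        ∑ p ∈ P, ∑ q ∈ P, ((A p.1 p.2 ∩ A q.1 q.2).indicator (fun _ => (1:ℝ))) ω := by
      funext ω
      rw [Pi.pow_apply, pow_two, Finset.sum_mul_sum]
      exact Finset.sum_congr rfl fun p _ => Finset.sum_congr rfl fun q _ => hmul p q ω
    rw [hps]
    have hint2 : ∀ (p q : ℕ × ℕ),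
        Integrable ((A p.1 p.2 ∩ A q.1 q.2).indicator (fun _ => (1:ℝ))) μ :=
      fun p q => (integrable_const (1:ℝ)).indicator ((hA _ _).inter (hA _ _))
    rw [integral_finset_sum P (fun p _ => integrable_finset_sum P (fun q _ => hint2 p q))]
    have hEpq : ∀ p ∈ P, ∫ ω, ∑ q ∈ P, ((A p.1 p.2 ∩ A q.1 q.2).indicator
        (fun _ => (1:ℝ))) ω ∂μ = ∑ q ∈ P, (μ (A p.1 p.2 ∩ A q.1 q.2)).toReal := by
      intro p _
      rw [integral_finset_sum P (fun q _ => hint2 p q)]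
      apply Finset.sum_congr rfl
      intro q _
      rw [integral_indicator_const (1:ℝ) ((hA _ _).inter (hA _ _)), smul_eq_mul, mul_one, measureReal_def]
    rw [Finset.sum_congr rfl hEpq]
    have hbound : ∀ p ∈ P, ∑ q ∈ P, (μ (A p.1 p.2 ∩ A q.1 q.2)).toReal
        ≤ (P.card : ℝ)*(2*u)^2 + 2*(2*u) := by
      intro p hp
      have hterm : ∀ q ∈ P, (μ (A p.1 p.2 ∩ A q.1 q.2)).toReal
          ≤ (2*u)^2 + (if q = p ∨ q = p.swap then 2*u else 0) := by
        intro q hq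
        by_cases hcase : q = p ∨ q = p.swap
        · rw [if_pos hcase]
          have h1 : (μ (A p.1 p.2 ∩ A q.1 q.2)).toReal ≤ (μ (A p.1 p.2)).toReal := by
            apply ENNReal.toReal_mono (measure_ne_top μ _)
            exact measure_mono inter_subset_left
          obtain ⟨-, -, hpne⟩ := Finset.mem_offDiag.1 hp
          rw [hAμ _ _ hpne, ENNReal.toReal_ofReal (by linarith)] at h1
          nlinarith [sq_nonneg (2*u)]
        · push_neg at hcase
          rw [if_neg (by tauto), add_zero, hcross p hp q hq hcase.1 hcase.2,
            ENNReal.toReal_mul, ENNReal.toReal_ofReal (by linarith)]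
          rw [pow_two]
      calc ∑ q ∈ P, (μ (A p.1 p.2 ∩ A q.1 q.2)).toReal
          ≤ ∑ q ∈ P, ((2*u)^2 + (if q = p ∨ q = p.swap then 2*u else 0)) :=
            Finset.sum_le_sum hterm
        _ = (P.card : ℝ)*(2*u)^2 + ∑ q ∈ P, (if q = p ∨ q = p.swap then 2*u else 0) := by
            rw [Finset.sum_add_distrib, Finset.sum_const, nsmul_eq_mul]
        _ ≤ (P.card : ℝ)*(2*u)^2 + 2*(2*u) := by
            have h2 : ∑ q ∈ P, (if q = p ∨ q = p.swap then (2*u) else 0) ≤ 2*(2*u) := by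
              rw [← Finset.sum_filter, Finset.sum_const, nsmul_eq_mul]
              have hsub : P.filter (fun q => q = p ∨ q = p.swap) ⊆ {p, p.swap} := by
                intro q hq
                rcases (Finset.mem_filter.1 hq).2 with h | h
                · simp [h]
                · simp [h]
              have hc2 : (P.filter (fun q => q = p ∨ q = p.swap)).card ≤ 2 := by
                refine (Finset.card_le_card hsub).trans ?_
                exact (Finset.card_insert_le _ _).trans (by simp)
              have hc3 : ((P.filter (fun q => q = p ∨ q = p.swap)).card : ℝ) ≤ 2 := by
                exact_mod_cast hc2
              nlinarith
            linarith
    calc ∑ p ∈ P, ∑ q ∈ P, (μ (A p.1 p.2 ∩ A q.1 q.2)).toReal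
        ≤ ∑ p ∈ P, ((P.card : ℝ)*(2*u)^2 + 2*(2*u)) := Finset.sum_le_sum hbound
      _ = (P.card : ℝ) * ((P.card : ℝ)*(2*u)^2 + 2*(2*u)) := by
          rw [Finset.sum_const, nsmul_eq_mul]
      _ = ((P.card : ℝ)*(2*u))^2 + 2*((P.card : ℝ)*(2*u)) := by ring
  -- variance bound
  have hvar := variance_eq_sub hMem
  rw [hvar, hEY]
  have hEYcard : ((N:ℝ)^2 - N) * (2*u) = (P.card : ℝ)*(2*u) := by rw [hcard]
  rw [hEYcard]
  have : 2*((P.card : ℝ)*(2*u)) ≤ 4*t*N := by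
    rw [hcard]
    have hexp : ((N:ℝ)^2 - N) * (2*u) = 2*t*N - 2*t := by
      rw [hu_def]
      field_simp
    rw [hexp]
    linarith
  linarith [hS2]

/-- Almost surely, the pair counting function converges along squares. -/
lemma key_squares (hmeas : ∀ i, Measurable (X i))
    (hindep : iIndepFun X μ)
    (hunif : ∀ i, Measure.map (X i) μ = ν) {t : ℝ} (ht : 0 ≤ t) :
    ∀ᵐ ω ∂μ, Tendsto (fun m : ℕ => (pairCount (fun n => X n ω) t (m^2) : ℝ) / (m:ℝ)^2)
      atTop (nhds (2*t)) := by
  set n₀ : ℕ := max 1 ⌈2*t⌉₊ with hn₀_def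
  have hn₀1 : 1 ≤ n₀ := le_max_left _ _
  have hn₀ : ∀ m : ℕ, n₀ ≤ m → 1 ≤ m^2 ∧ 2*t ≤ ((m^2 : ℕ) : ℝ) := by
    intro m hm
    have h1 : 1 ≤ m := le_trans (le_max_left _ _) hm
    have h2 : ⌈2*t⌉₊ ≤ m := le_trans (le_max_right _ _) hm
    refine ⟨by nlinarith, ?_⟩
    have h3 : 2*t ≤ (⌈2*t⌉₊ : ℝ) := Nat.le_ceil _
    have h5 : ((⌈2*t⌉₊ : ℕ) : ℝ) ≤ (m : ℝ) := Nat.cast_le.2 h2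
    have h6 : (1:ℝ) ≤ (m:ℝ) := by exact_mod_cast h1
    have h4 : (m : ℝ) ≤ ((m^2 : ℕ) : ℝ) := by push_cast; nlinarith
    linarith
  -- Step 1 : for each k, a.s. eventually the deviation is small
  have step1 : ∀ k : ℕ, ∀ᵐ ω ∂μ, ∀ᶠ m : ℕ in atTop,
      |(pairCount (fun n => X n ω) t (m^2) : ℝ)
        - μ[fun ω' => (pairCount (fun n => X n ω') t (m^2) : ℝ)]| < (m:ℝ)^2 / (k+1) := by
    intro k
    set bad : ℕ → Set Ω := fun m =>
      {ω | ((m + n₀ : ℕ):ℝ)^2 / ((k:ℝ)+1) ≤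
        |(pairCount (fun n => X n ω) t ((m + n₀)^2) : ℝ)
          - μ[fun ω' => (pairCount (fun n => X n ω') t ((m + n₀)^2) : ℝ)]|} with hbad_def
    have hbound : ∀ m : ℕ, μ (bad m)
        ≤ ENNReal.ofReal (4*t*((k:ℝ)+1)^2 / ((m:ℝ)+1)^2) := by
      intro m
      have hmn : n₀ ≤ m + n₀ := le_add_self
      obtain ⟨hN1, hN2⟩ := hn₀ (m + n₀) hmn
      obtain ⟨hMem, hE, hVar⟩ := moments hmeas hindep hunif ht hN1 hN2
      have hm1 : 1 ≤ m + n₀ := le_trans hn₀1 hmn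
      have hMpos : (0:ℝ) < ((m + n₀ : ℕ):ℝ) := by exact_mod_cast hm1
      have hcpos : (0:ℝ) < ((m + n₀ : ℕ):ℝ)^2 / ((k:ℝ)+1) := by positivity
      have hcheb := meas_ge_le_variance_div_sq (μ := μ) hMem hcpos
      refine le_trans hcheb (ENNReal.ofReal_le_ofReal ?_)
      set M : ℝ := ((m + n₀ : ℕ):ℝ) with hM_def
      have hMcast : (((m + n₀)^2 : ℕ) : ℝ) = M^2 := by rw [hM_def]; push_cast; ring
      have hvc : variance (fun ω => (pairCount (fun n => X n ω) t ((m+n₀)^2) : ℝ)) μ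
          ≤ 4*t*M^2 := by
        exact le_trans hVar (le_of_eq (by rw [hMcast]))
      have hM1 : (1:ℝ) ≤ M := by rw [hM_def]; exact_mod_cast hm1
      have hMm : (m:ℝ) + 1 ≤ M := by
        rw [hM_def]
        push_cast
        have : (1:ℝ) ≤ (n₀:ℝ) := by exact_mod_cast hn₀1
        linarith
      calc variance (fun ω => (pairCount (fun n => X n ω) t ((m+n₀)^2) : ℝ)) μ
            / (M^2 / ((k:ℝ)+1))^2
          ≤ (4*t*M^2) / (M^2 / ((k:ℝ)+1))^2 :=
            div_le_div_of_nonneg_right hvc (by positivity)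
        _ = 4*t*((k:ℝ)+1)^2 / M^2 := by
            field_simp
        _ ≤ 4*t*((k:ℝ)+1)^2 / ((m:ℝ)+1)^2 := by
            apply div_le_div_of_nonneg_left (by positivity) (by positivity)
            nlinarith
    have hsum : (∑' m : ℕ, μ (bad m)) ≠ ⊤ := by
      have h0 : Summable (fun m : ℕ => 1 / ((m:ℝ)+1)^2) := by
        have h1 : Summable (fun n : ℕ => 1 / (n:ℝ)^2) :=
          Real.summable_one_div_nat_pow.2 one_lt_two
        have := (summable_nat_add_iff 1).2 h1
        apply this.congr
        intro n
        push_cast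
        ring_nf
      have hs : Summable (fun m : ℕ => 4*t*((k:ℝ)+1)^2 / ((m:ℝ)+1)^2) := by
        have := h0.mul_left (4*t*((k:ℝ)+1)^2)
        apply this.congr
        intro n
        field_simp
      refine ne_top_of_le_ne_top ?_ (ENNReal.tsum_le_tsum hbound)
      rw [← ENNReal.ofReal_tsum_of_nonneg (fun n => by positivity) hs]
      exact ENNReal.ofReal_ne_top
    have hBC := ae_eventually_notMem hsum
    filter_upwards [hBC] with ω hω
    obtain ⟨a, ha⟩ := eventually_atTop.1 hω
    refine eventually_atTop.2 ⟨a + n₀, fun M hM => ?_⟩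
    have hMeq : (M - n₀) + n₀ = M := by omega
    have hnot := ha (M - n₀) (by omega)
    rw [hbad_def] at hnot
    simp only [mem_setOf_eq, not_le, hMeq] at hnot
    exact hnot
  -- Step 2 : combine over k
  have step2 : ∀ᵐ ω ∂μ, ∀ k : ℕ, ∀ᶠ m : ℕ in atTop,
      |(pairCount (fun n => X n ω) t (m^2) : ℝ)
        - μ[fun ω' => (pairCount (fun n => X n ω') t (m^2) : ℝ)]| < (m:ℝ)^2 / (k+1) :=
    (ae_all_iff).2 step1
  -- Step 3 : conclude
  filter_upwards [step2] with ω hω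
  have hEt : Tendsto (fun m : ℕ =>
      μ[fun ω' => (pairCount (fun n => X n ω') t (m^2) : ℝ)] / (m:ℝ)^2) atTop
      (nhds (2*t)) := by
    have hlim : Tendsto (fun m : ℕ => 2*t*(1 - 1/(m:ℝ)^2)) atTop (nhds (2*t)) := by
      have h1 : Tendsto (fun m : ℕ => 1/(m:ℝ)^2) atTop (nhds 0) := by
        have := (tendsto_one_div_atTop_nhds_zero_nat (𝕜 := ℝ)).mul (tendsto_one_div_atTop_nhds_zero_nat (𝕜 := ℝ))
        rw [mul_zero] at this
        apply this.congr
        intro n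
        rw [div_mul_div_comm, one_mul, ← pow_two]
      have h2 : Tendsto (fun m : ℕ => (1:ℝ) - 1/(m:ℝ)^2) atTop (nhds 1) := by
        have h3 := ((tendsto_const_nhds : Tendsto (fun _ : ℕ => (1:ℝ)) atTop (nhds 1)).sub h1)
        simpa using h3
      have h4 := ((tendsto_const_nhds : Tendsto (fun _ : ℕ => (2*t:ℝ)) atTop (nhds (2*t))).mul h2)
      simpa using h4
    apply hlim.congr'
    filter_upwards [eventually_ge_atTop n₀] with m hm
    obtain ⟨hN1, hN2⟩ := hn₀ m hm
    obtain ⟨-, hE, -⟩ := moments hmeas hindep hunif ht hN1 hN2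
    rw [hE]
    have hm1 : 1 ≤ m := le_trans hn₀1 hm
    have hmpos : (0:ℝ) < (m:ℝ) := by exact_mod_cast hm1
    push_cast
    field_simp
  have hdiff : Tendsto (fun m : ℕ =>
      ((pairCount (fun n => X n ω) t (m^2) : ℝ)
        - μ[fun ω' => (pairCount (fun n => X n ω') t (m^2) : ℝ)]) / (m:ℝ)^2) atTop
      (nhds 0) := by
    rw [Metric.tendsto_atTop]
    intro ε hε
    obtain ⟨k, hk⟩ := exists_nat_one_div_lt hε
    obtain ⟨a, ha⟩ := eventually_atTop.1 (hω k)
    refine ⟨max a 1, fun m hm => ?_⟩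
    have hma : a ≤ m := le_trans (le_max_left _ _) hm
    have hm1 : 1 ≤ m := le_trans (le_max_right _ _) hm
    have hmpos : (0:ℝ) < (m:ℝ)^2 := by
      have : (0:ℝ) < (m:ℝ) := by exact_mod_cast hm1
      positivity
    rw [Real.dist_eq, sub_zero, abs_div, abs_of_pos hmpos]
    have h1 := ha m hma
    have h2 : |(pairCount (fun n => X n ω) t (m^2) : ℝ)
        - μ[fun ω' => (pairCount (fun n => X n ω') t (m^2) : ℝ)]| / (m:ℝ)^2
        < ((m:ℝ)^2 / ((k:ℝ)+1)) / (m:ℝ)^2 := by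
      exact div_lt_div_of_pos_right h1 hmpos
    have h3 : ((m:ℝ)^2 / ((k:ℝ)+1)) / (m:ℝ)^2 = 1/((k:ℝ)+1) := by
      field_simp
    rw [h3] at h2
    exact h2.trans hk
  have := hdiff.add hEt
  rw [zero_add] at this
  apply this.congr
  intro m
  rw [sub_div, sub_add_cancel]

end Prob

/-- A sequence of independent random variables, each uniformly
distributed on `[0,1]`, almost surely has Poissonian pair correlations. -/
theorem statement3 {Ω : Type*} [MeasurableSpace Ω] (μ : Measure Ω)
    [IsProbabilityMeasure μ] (X : ℕ → Ω → ℝ) (hmeas : ∀ i, Measurable (X i))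
    (hindep : iIndepFun X μ)
    (hunif : ∀ i, Measure.map (X i) μ = volume.restrict (Set.Icc (0 : ℝ) 1)) :
    ∀ᵐ ω ∂μ, ∀ s : ℝ, 0 ≤ s →
      Tendsto (fun N : ℕ => (pairCount (fun n => X n ω) s N : ℝ) / N)
        atTop (nhds (2 * s)) := by
  have hkey : ∀ᵐ ω ∂μ, ∀ q : ℚ, 0 ≤ q →
      Tendsto (fun m : ℕ => (pairCount (fun n => X n ω) (q:ℝ) (m^2) : ℝ) / (m:ℝ)^2)
        atTop (nhds (2*(q:ℝ))) := by
    rw [ae_all_iff]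
    intro q
    by_cases hq : 0 ≤ q
    · filter_upwards [key_squares hmeas hindep hunif (t := (q:ℝ)) (by exact_mod_cast hq)]
        with ω h
      intro _
      exact h
    · filter_upwards [] with ω h
      exact absurd h hq
  filter_upwards [hkey] with ω hω
  intro s hs
  exact det_reduction (fun n => X n ω) hω s hs
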